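/- Let H be a real Hilbert space continuously embedded in a normed space L with ‖u‖_L ≤ C_S^{1/2}‖u‖_H for all u (Sobolev inequality), and let E(u) = (1/2)‖u‖_H² - (1/p)‖u‖_L^p with p > 2. If u_n is a Palais–Smale sequence for E at level c < ((p-2)/(2p)) C_S^{-p/(p-2)}, then u_n → 0 strongly in H. -/

import Mathlib

open Filter Topology

/-- Abstract version of Lemma 3.3: a Palais–Smale sequence at a level strictly
below the critical threshold `((p-2)/(2p)) C_S^{-p/(p-2)}` converges strongly
to `0`. -/
theorem palais_smale_below_threshold
    {H L : Type*} [NormedAddCommGroup H] [InnerProductSpace ℝ H]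
    [NormedAddCommGroup L] [NormedSpace ℝ L]
    (p C_S : ℝ) (hp : 2 < p) (hCS : 0 < C_S)
    (ι : H →L[ℝ] L)
    (hSob : ∀ u : H, ‖ι u‖ ≤ C_S ^ ((1 : ℝ) / 2) * ‖u‖)
    (E : H → ℝ)
    (hEdef : ∀ u, E u = (1 / 2) * ‖u‖ ^ 2 - (1 / p) * ‖ι u‖ ^ p)
    (E' : H → (H →L[ℝ] ℝ))
    (hE' : ∀ u, HasFDerivAt E (E' u) u)
    (u : ℕ → H) (c : ℝ)
    (hc : c < ((p - 2) / (2 * p)) * C_S ^ (-(p / (p - 2))))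
    (hPS1 : Tendsto (fun n => E (u n)) atTop (𝓝 c))
    (hPS2 : Tendsto (fun n => ‖E' (u n)‖) atTop (𝓝 0)) :
    Tendsto u atTop (𝓝 0) := by
  have hp0 : (0:ℝ) < p := by linarith
  have hpne : p ≠ 0 := ne_of_gt hp0
  -- Step 1: E' v v = ‖v‖^2 - ‖ι v‖^p
  have key : ∀ v : H, E' v v = ‖v‖^2 - ‖ι v‖^p := by
    intro v
    have hf : HasDerivAt (fun t : ℝ => t • v) v 1 := by
      simpa using (hasDerivAt_id (1:ℝ)).smul_const v
    have hφ : HasDerivAt (fun t : ℝ => E (t • v)) (E' v v) 1 := by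
      have h := (hE' ((1:ℝ) • v)).comp_hasDerivAt 1 hf
      simp only [one_smul] at h
      exact h
    have hψ : HasDerivAt
        (fun t : ℝ => (1/2) * t^2 * ‖v‖^2 - (1/p) * t^p * ‖ι v‖^p)
        (‖v‖^2 - ‖ι v‖^p) 1 := by
      have h1 : HasDerivAt (fun t : ℝ => (1/2) * t^2 * ‖v‖^2)
          ((1/2) * (2 * 1^1) * ‖v‖^2) 1 :=
        (((hasDerivAt_pow 2 (1:ℝ))).const_mul (1/2)).mul_const _
      have h2 : HasDerivAt (fun t : ℝ => (1/p) * t^p * ‖ι v‖^p)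
          ((1/p) * (p * (1:ℝ)^(p-1)) * ‖ι v‖^p) 1 :=
        ((Real.hasDerivAt_rpow_const (p := p) (Or.inl one_ne_zero)).const_mul
          (1/p)).mul_const _
      have h3 := h1.sub h2
      have e1 : (1/2 : ℝ) * (2 * 1^1) = 1 := by norm_num
      have e2 : (1/p : ℝ) * (p * (1:ℝ)^(p-1)) = 1 := by
        rw [Real.one_rpow]
        field_simp
      rw [e1, e2, one_mul, one_mul] at h3
      exact h3
    have heq : (fun t : ℝ => E (t • v)) =ᶠ[𝓝 (1:ℝ)]
        (fun t : ℝ => (1/2) * t^2 * ‖v‖^2 - (1/p) * t^p * ‖ι v‖^p) := by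
      filter_upwards [eventually_gt_nhds (by norm_num : (0:ℝ) < 1)] with t ht
      have hnv : ‖t • v‖ = t * ‖v‖ := by
        rw [norm_smul, Real.norm_eq_abs, abs_of_pos ht]
      have hni : ‖ι (t • v)‖ = t * ‖ι v‖ := by
        rw [map_smul, norm_smul, Real.norm_eq_abs, abs_of_pos ht]
      rw [hEdef, hnv, hni, Real.mul_rpow ht.le (norm_nonneg _), mul_pow]
      ring
    have hφ' : HasDerivAt (fun t : ℝ => E (t • v)) (‖v‖^2 - ‖ι v‖^p) 1 :=
      hψ.congr_of_eventuallyEq heq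
    exact hφ.unique hφ'
  -- notation
  set A : ℕ → ℝ := fun n => ‖u n‖^2 with hA_def
  set B : ℕ → ℝ := fun n => ‖ι (u n)‖^p with hB_def
  set ε : ℕ → ℝ := fun n => ‖E' (u n)‖ with hε_def
  set θ : ℝ := (p - 2) / (2 * p) with hθ_def
  have hθ : 0 < θ := by
    apply div_pos <;> linarith
  have hAnn : ∀ n, 0 ≤ A n := fun n => sq_nonneg _
  have hεnn : ∀ n, 0 ≤ ε n := fun n => norm_nonneg _
  have h1 : ∀ n, |A n - B n| ≤ ε n * ‖u n‖ := by
    intro n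
    have h := (E' (u n)).le_opNorm (u n)
    rw [Real.norm_eq_abs] at h
    rw [← key (u n)]
    exact h
  have hub : ∀ n, ‖u n‖ ≤ 1 + A n := by
    intro n
    show ‖u n‖ ≤ 1 + ‖u n‖^2
    rcases le_total (‖u n‖) 1 with h | h
    · nlinarith [sq_nonneg (‖u n‖)]
    · nlinarith [sq_nonneg (‖u n‖ - 1)]
  have h1' : ∀ n, |A n - B n| ≤ ε n * (1 + A n) := fun n =>
    (h1 n).trans (mul_le_mul_of_nonneg_left (hub n) (hεnn n))
  have h2 : ∀ n, θ * A n = E (u n) - (1/p) * (A n - B n) := by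
    intro n
    rw [hEdef]
    simp only [hθ_def, hA_def, hB_def]
    field_simp
    ring
  -- boundedness of A
  set K : ℝ := (c + 1 + θ/2) * (2/θ) with hK_def
  have hbound : ∀ᶠ n in atTop, A n ≤ K := by
    have hE_ev : ∀ᶠ n in atTop, E (u n) ≤ c + 1 :=
      hPS1.eventually (eventually_le_nhds (by linarith : c < c + 1))
    have hε_ev : ∀ᶠ n in atTop, ε n ≤ θ * p / 2 :=
      hPS2.eventually (eventually_le_nhds (by positivity : (0:ℝ) < θ * p / 2))
    filter_upwards [hE_ev, hε_ev] with n hEn hεn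
    have h := h2 n
    have habs := h1' n
    have h5 : (0:ℝ) ≤ 1 + A n := by linarith [hAnn n]
    have hip : (0:ℝ) < 1/p := by positivity
    have hstep : θ * A n ≤ c + 1 + (1/p) * (ε n * (1 + A n)) := by
      have h13 : -(A n - B n) ≤ ε n * (1 + A n) := (neg_le_abs _).trans habs
      have h14 := mul_le_mul_of_nonneg_left h13 hip.le
      nlinarith [h14]
    have h7 : ε n * (1 + A n) ≤ θ * p / 2 * (1 + A n) :=
      mul_le_mul_of_nonneg_right hεn h5
    have h4 : (1/p) * (ε n * (1 + A n)) ≤ (θ/2) * (1 + A n) := by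
      have := mul_le_mul_of_nonneg_left h7 hip.le
      calc (1/p) * (ε n * (1 + A n)) ≤ (1/p) * (θ * p / 2 * (1 + A n)) := this
        _ = (θ/2) * (1 + A n) := by field_simp
    have h6 : (θ/2) * A n ≤ c + 1 + θ/2 := by nlinarith
    calc A n = ((θ/2) * A n) * (2/θ) := by field_simp
      _ ≤ K := mul_le_mul_of_nonneg_right h6 (by positivity)
  -- A n - B n → 0
  have hAB : Tendsto (fun n => A n - B n) atTop (𝓝 0) := by
    refine squeeze_zero_norm' (a := fun n => ε n * (1 + K)) ?_ ?_
    · filter_upwards [hbound] with n hn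
      rw [Real.norm_eq_abs]
      refine (h1' n).trans ?_
      exact mul_le_mul_of_nonneg_left (by linarith) (hεnn n)
    · simpa using hPS2.mul_const (1 + K)
  -- A → a := c / θ
  have hθA : Tendsto (fun n => θ * A n) atTop (𝓝 c) := by
    have : Tendsto (fun n => E (u n) - (1/p) * (A n - B n)) atTop (𝓝 (c - (1/p) * 0)) :=
      hPS1.sub (hAB.const_mul (1/p))
    simp only [mul_zero, sub_zero] at this
    exact this.congr (fun n => (h2 n).symm)
  set a : ℝ := c / θ with ha_def
  have hA : Tendsto A atTop (𝓝 a) := by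
    have := hθA.const_mul (1/θ)
    have heq : ∀ n, (1/θ) * (θ * A n) = A n := by
      intro n; field_simp
    have hca : (1/θ) * c = a := by
      rw [ha_def]; field_simp
    rw [hca] at this
    exact this.congr heq
  have ha0 : 0 ≤ a := ge_of_tendsto' hA hAnn
  have hB : Tendsto B atTop (𝓝 a) := by
    have := hA.sub hAB
    simp only [sub_sub_cancel, sub_zero] at this
    exact this
  have hca : c = θ * a := by rw [ha_def, mul_div_assoc', mul_div_cancel_left₀ c hθ.ne']
  -- a = 0
  have haz : a = 0 := by
    by_contra hane
    have hapos : 0 < a := lt_of_le_of_ne ha0 (Ne.symm hane)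
    -- Sobolev bound on B
    have hBle : ∀ n, B n ≤ C_S ^ (p/2) * A n ^ (p/2) := by
      intro n
      have h8 : ‖ι (u n)‖ ^ p ≤ (C_S ^ ((1:ℝ)/2) * ‖u n‖) ^ p :=
        Real.rpow_le_rpow (norm_nonneg _) (hSob (u n)) hp0.le
      refine h8.trans_eq ?_
      show _ = C_S ^ (p/2) * (‖u n‖^2 : ℝ) ^ (p/2)
      rw [Real.mul_rpow (Real.rpow_nonneg hCS.le _) (norm_nonneg _),
        ← Real.rpow_natCast (‖u n‖) 2, ← Real.rpow_mul hCS.le,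
        ← Real.rpow_mul (norm_nonneg _)]
      push_cast
      rw [show (1:ℝ)/2*p = p/2 by ring, show (2:ℝ)*(p/2) = p by ring]
    have hRHS : Tendsto (fun n => C_S ^ (p/2) * A n ^ (p/2)) atTop
        (𝓝 (C_S ^ (p/2) * a ^ (p/2))) :=
      (hA.rpow_const (Or.inr (by positivity))).const_mul _
    have hineq : a ≤ C_S ^ (p/2) * a ^ (p/2) :=
      le_of_tendsto_of_tendsto' hB hRHS hBle
    -- but a < C_S^{-p/(p-2)} forces the opposite strict inequality
    have haT : a < C_S ^ (-(p / (p - 2))) := by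
      rw [hca] at hc
      exact lt_of_mul_lt_mul_left hc hθ.le
    have hq : (0:ℝ) < (p - 2)/2 := by linarith
    have h9 : a ^ ((p-2)/2) < (C_S ^ (-(p / (p - 2)))) ^ ((p-2)/2) :=
      Real.rpow_lt_rpow ha0 haT hq
    have hne2 : p - 2 ≠ 0 := by linarith
    have h10 : (C_S ^ (-(p / (p - 2)))) ^ ((p-2)/2) = C_S ^ (-(p/2)) := by
      rw [← Real.rpow_mul hCS.le]
      congr 1
      rw [neg_mul, neg_inj, div_mul_div_comm, mul_comm p (p-2), mul_comm (p-2) 2,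
        mul_comm 2 (p-2)]
      exact mul_div_mul_left p 2 hne2
    rw [h10] at h9
    have h11 : C_S ^ (p/2) * a ^ ((p-2)/2) < 1 := by
      have := mul_lt_mul_of_pos_left h9 (Real.rpow_pos_of_pos hCS (p/2))
      rwa [← Real.rpow_add hCS, add_neg_cancel, Real.rpow_zero] at this
    have h12 : a ^ (p/2) = a ^ ((p-2)/2) * a := by
      rw [show p/2 = (p-2)/2 + 1 by ring, Real.rpow_add hapos, Real.rpow_one]
    have : C_S ^ (p/2) * a ^ (p/2) < a := by
      calc C_S ^ (p/2) * a ^ (p/2) = (C_S ^ (p/2) * a ^ ((p-2)/2)) * a := by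
            rw [h12]; ring
        _ < 1 * a := mul_lt_mul_of_pos_right h11 hapos
        _ = a := one_mul a
    linarith
  -- conclude
  rw [haz] at hA
  rw [tendsto_zero_iff_norm_tendsto_zero]
  have hs : Tendsto (fun n => Real.sqrt (A n)) atTop (𝓝 (Real.sqrt 0)) :=
    hA.sqrt
  rw [Real.sqrt_zero] at hs
  exact hs.congr (fun n => Real.sqrt_sq (norm_nonneg (u n)))
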